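/- Let Δ be a 2-local derivation on M_2(B). For matrices x = [[x11, x12],[x21, x22]] and y = [[x11, x12],[0, x22]] (same entries except the (2,1)-entry), the (1,2)-entries of Δ(x) and Δ(y) coincide. -/

import Mathlib

open Matrix

def IsDerivation {A : Type*} [Ring A] [Algebra ℂ A] (D : A → A) : Prop :=
  (∀ x y, D (x + y) = D x + D y) ∧ (∀ (c : ℂ) (x), D (c • x) = c • D x) ∧
  (∀ x y, D (x * y) = D x * y + x * D y)

def Is2LocalDerivation {A : Type*} [Ring A] [Algebra ℂ A] (Δ : A → A) : Prop :=
  ∀ x y, ∃ D, IsDerivation D ∧ Δ x = D x ∧ Δ y = D y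

def HasInnerDerivationProperty (A : Type*) [Ring A] [Algebra ℂ A] : Prop :=
  ∀ D : A → A, IsDerivation D → ∃ a : A, ∀ x, D x = a * x - x * a

/-- `Δ` vanishes on the linear span of the matrix units. -/
def VanishesOnUnits {A : Type*} [Ring A] [Algebra ℂ A] {n : ℕ}
    (Δ : Matrix (Fin n) (Fin n) A → Matrix (Fin n) (Fin n) A) : Prop :=
  ∀ x ∈ Submodule.span ℂ (Set.range fun p : Fin n × Fin n =>
      Matrix.single p.1 p.2 (1 : A)), Δ x = 0
theorem stmt13 {B : Type*} [NormedRing B] [NormedAlgebra ℂ B] [CompleteSpace B]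
    (hidp : HasInnerDerivationProperty B)
    (Δ : Matrix (Fin 2) (Fin 2) B → Matrix (Fin 2) (Fin 2) B)
    (hΔ : Is2LocalDerivation Δ)
    (x y : Matrix (Fin 2) (Fin 2) B)
    (h00 : y 0 0 = x 0 0) (h01 : y 0 1 = x 0 1)
    (h10 : y 1 0 = 0) (h11 : y 1 1 = x 1 1) :
    Δ x 0 1 = Δ y 0 1 := by
  obtain ⟨D, ⟨hadd, hsmul, hmul⟩, hx, hy⟩ := hΔ x y
  set z := x - y with hz
  have hDx : D x = D z + D y := by
    have := hadd z y
    rw [hz, sub_add_cancel] at this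
    exact this
  have hzq : z = single 1 1 (1 : B) * (z * single 0 0 (1 : B)) := by
    ext i j
    fin_cases i <;> fin_cases j <;>
      simp [Matrix.mul_apply, Fin.sum_univ_two, Matrix.single_apply_same,
        hz, Matrix.sub_apply, h00, h01, h10, h11]
  have key : D z 0 1 = 0 := by
    rw [hzq, hmul, hmul]
    simp [Matrix.add_apply, Matrix.mul_apply, Fin.sum_univ_two]
  rw [hx, hy, hDx]
  simp [Matrix.add_apply, key]
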